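/- arXiv:2201.07553 — 2 statements merged into one kernel-verified Lean document; each statement's English description precedes it below -/
import Mathlib

section
/- Let G be a group of order n and let S' = {D₁, …, D_m} be a collection of m pairwise disjoint k-subsets of G*. (i) If D = ⋃ᵢ Dᵢ is an (n, mk, λ)-difference set, then S' is an (n, m, k, σ, μ)-external partial difference family if and only if S' is an (n, m, k, λ−σ, λ−μ)-disjoint partial difference family. (ii) If P = ⋃ᵢ Dᵢ is an (n, mk, λ, μ)-partial difference set, then S' is an (n, m, k, λ*, μ*)-external partial difference family if and only if S' is an (n, m, k, λ−λ*, μ−μ*)-disjoint partial difference family. -/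
open Finset

section Defs

variable {G : Type*} [AddGroup G] [DecidableEq G]

/-- The multiset of internal differences `x - y` (`x ≠ y`) of a finset. -/
def intDiff (D : Finset G) : Multiset G :=
  ((D ×ˢ D).filter fun p => p.1 ≠ p.2).val.map fun p => p.1 - p.2

/-- The multiset of external differences `x - y`, `x ∈ D₁`, `y ∈ D₂`. -/
def extDiff (D₁ D₂ : Finset G) : Multiset G :=
  (D₁ ×ˢ D₂).val.map fun p => p.1 - p.2

variable {ι : Type*} [Fintype ι] [DecidableEq ι]

/-- The multiset of all internal differences of a family of sets. -/
def famInt (D : ι → Finset G) : Multiset G := ∑ i, intDiff (D i)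

/-- The multiset of all external differences between distinct members of a family of sets. -/
def famExt (D : ι → Finset G) : Multiset G :=
  ∑ i, ∑ j, if j = i then 0 else extDiff (D i) (D j)

/-- The union of the members of a family of sets. -/
def famU (D : ι → Finset G) : Finset G := Finset.univ.biUnion D

variable [Fintype G]

/-- `D` is an `(n,k,λ)`-difference set: `Δ(D) = λ(G*)`. -/
def IsDS (n k : ℕ) (lam : ℤ) (D : Finset G) : Prop :=
  Fintype.card G = n ∧ D.card = k ∧
    ∀ x : G, ((intDiff D).count x : ℤ) = if x = 0 then 0 else lam

/-- `P` is an `(n,k,λ,μ)`-partial difference set: `Δ(P) = λ(P) + μ(G* \ P)`. -/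
def IsPDS (n k : ℕ) (lam mu : ℤ) (P : Finset G) : Prop :=
  Fintype.card G = n ∧ P.card = k ∧
    ∀ x : G, ((intDiff P).count x : ℤ) =
      if x ∈ P then lam else if x = 0 then 0 else mu

/-- `D` is a family of `m` pairwise disjoint `k`-subsets of a group of order `n`. -/
def FamShape (n m k : ℕ) (D : ι → Finset G) : Prop :=
  Fintype.card G = n ∧ Fintype.card ι = m ∧ (∀ i, (D i).card = k) ∧
    ∀ i j, i ≠ j → Disjoint (D i) (D j)

/-- `(n,m,k,λ)`-disjoint difference family: `⋃ᵢ Δ(Dᵢ) = λ(G*)`. -/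
def IsDDF (n m k : ℕ) (lam : ℤ) (D : ι → Finset G) : Prop :=
  FamShape n m k D ∧
    ∀ x : G, ((famInt D).count x : ℤ) = if x = 0 then 0 else lam

/-- `(n,m,k,λ)`-external difference family: `⋃_{i≠j} Δ(Dᵢ,Dⱼ) = λ(G*)`. -/
def IsEDF (n m k : ℕ) (lam : ℤ) (D : ι → Finset G) : Prop :=
  FamShape n m k D ∧
    ∀ x : G, ((famExt D).count x : ℤ) = if x = 0 then 0 else lam

/-- `(n,m,k,λ,μ)`-disjoint partial difference family:
sets in `G*`, `⋃ᵢ Δ(Dᵢ) = λ(S) + μ(G* \ S)` where `S = ⋃ᵢ Dᵢ`. -/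
def IsDPDF (n m k : ℕ) (lam mu : ℤ) (D : ι → Finset G) : Prop :=
  FamShape n m k D ∧ (∀ i, (0 : G) ∉ D i) ∧
    ∀ x : G, ((famInt D).count x : ℤ) =
      if x ∈ famU D then lam else if x = 0 then 0 else mu

/-- `(n,m,k,λ,μ)`-external partial difference family:
sets in `G*`, `⋃_{i≠j} Δ(Dᵢ,Dⱼ) = λ(S) + μ(G* \ S)` where `S = ⋃ᵢ Dᵢ`. -/
def IsEPDF (n m k : ℕ) (lam mu : ℤ) (D : ι → Finset G) : Prop :=
  FamShape n m k D ∧ (∀ i, (0 : G) ∉ D i) ∧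
    ∀ x : G, ((famExt D).count x : ℤ) =
      if x ∈ famU D then lam else if x = 0 then 0 else mu

end Defs

section FieldDefs

variable {F : Type*} [Field F] [DecidableEq F]

/-- `α` is a primitive element: every nonzero element is a power of `α`. -/
def IsPrimitiveElt (α : F) : Prop := ∀ x : F, x ≠ 0 → ∃ k : ℕ, x = α ^ k

/-- The coset `α^i⟨α^e⟩` of the cyclotomic class of order `e` (of size `f`). -/
def cyclo (α : F) (e f i : ℕ) : Finset F :=
  (Finset.range f).image fun j => α ^ (i + e * j)

/-- The cyclotomic number `(i,j)_e`: the number of pairs `(zᵢ, zⱼ) ∈ Cᵢ × Cⱼ` with `zᵢ + 1 = zⱼ`. -/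
def cycNum (α : F) (e f i j : ℕ) : ℕ :=
  ((cyclo α e f i ×ˢ cyclo α e f j).filter fun p => p.1 + 1 = p.2).card

/-- `Φᵢ = {x ∈ C₀^e : x ≠ 1, x - 1 ∈ α^i C₀^ε}`. -/
def Phi (α : F) (e f ε ρ i : ℕ) : Finset F :=
  (cyclo α e f 0).filter fun x => x ≠ 1 ∧ x - 1 ∈ cyclo α ε ρ i

/-- `φᵢ = |Φᵢ|`. -/
def phi (α : F) (e f ε ρ i : ℕ) : ℕ := (Phi α e f ε ρ i).card

end FieldDefs

section Aux
variable {G : Type*} [AddGroup G] [DecidableEq G]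

lemma count_intDiff (S : Finset G) (x : G) :
    (intDiff S).count x = ∑ a ∈ S, ∑ b ∈ S, if a ≠ b ∧ a - b = x then 1 else 0 := by
  rw [intDiff, Multiset.count_map]
  rw [← Finset.filter_val, Finset.filter_filter]
  rw [show ((S ×ˢ S).filter fun p => p.1 ≠ p.2 ∧ x = p.1 - p.2).val.card
    = ((S ×ˢ S).filter fun p => p.1 ≠ p.2 ∧ x = p.1 - p.2).card from rfl]
  rw [Finset.card_filter, Finset.sum_product]
  simp [eq_comm]

lemma count_extDiff (A B : Finset G) (x : G) :
    (extDiff A B).count x = ∑ a ∈ A, ∑ b ∈ B, if a - b = x then 1 else 0 := by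
  rw [extDiff, Multiset.count_map, ← Finset.filter_val]
  rw [show ((A ×ˢ B).filter fun p => x = p.1 - p.2).val.card
    = ((A ×ˢ B).filter fun p => x = p.1 - p.2).card from rfl]
  rw [Finset.card_filter, Finset.sum_product]
  simp [eq_comm]

variable {ι : Type*} [Fintype ι] [DecidableEq ι]

variable {ι : Type*} [Fintype ι] [DecidableEq ι]

lemma key (D : ι → Finset G) (hdisj : ∀ i j, i ≠ j → Disjoint (D i) (D j)) (x : G) :
    (intDiff (famU D)).count x = (famInt D).count x + (famExt D).count x := by
  have hU : ∀ f : G → ℕ, ∑ a ∈ famU D, f a = ∑ i, ∑ a ∈ D i, f a := fun f =>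
    Finset.sum_biUnion (fun i _ j _ hij => hdisj i j hij)
  have hsplit : ∑ a ∈ famU D, ∑ b ∈ famU D, (if a ≠ b ∧ a - b = x then 1 else 0)
      = ∑ i, ∑ j, ∑ a ∈ D i, ∑ b ∈ D j, (if a ≠ b ∧ a - b = x then 1 else 0) := by
    rw [hU]
    refine Finset.sum_congr rfl fun i _ => ?_
    rw [Finset.sum_comm, hU]
    exact Finset.sum_congr rfl fun j _ => Finset.sum_comm ..
  have hterm : ∀ i j, ∑ a ∈ D i, ∑ b ∈ D j, (if a ≠ b ∧ a - b = x then 1 else 0)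
      = if j = i then (intDiff (D i)).count x else (extDiff (D i) (D j)).count x := by
    intro i j
    split
    · next h => subst h; rw [count_intDiff]
    · next h =>
      rw [count_extDiff]
      refine Finset.sum_congr rfl fun a ha => Finset.sum_congr rfl fun b hb => ?_
      have hab : a ≠ b := fun e =>
        (Finset.disjoint_left.mp (hdisj i j (Ne.symm h))) ha (e ▸ hb)
      simp [hab]
  have hInt : (famInt D).count x = ∑ i, (intDiff (D i)).count x := by
    simp [famInt, Multiset.count_sum']
  have hExt : (famExt D).count x
      = ∑ i, ∑ j, (if j = i then 0 else (extDiff (D i) (D j)).count x) := by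
    simp only [famExt, Multiset.count_sum']
    refine Finset.sum_congr rfl fun i _ => Finset.sum_congr rfl fun j _ => ?_
    split <;> simp
  rw [count_intDiff, hsplit, hInt, hExt, ← Finset.sum_add_distrib]
  refine Finset.sum_congr rfl fun i _ => ?_
  have : ∀ j, (if j = i then (intDiff (D i)).count x else (extDiff (D i) (D j)).count x)
      = (if j = i then (intDiff (D i)).count x else 0)
        + (if j = i then 0 else (extDiff (D i) (D j)).count x) := by
    intro j; split <;> simp
  simp only [hterm, this, Finset.sum_add_distrib, Finset.sum_ite_eq' Finset.univ i,
    Finset.mem_univ, if_true]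

end Aux

/-- Theorem: for a family of `m` pairwise disjoint `k`-subsets of `G*`:
(i) if the union is an `(n,m*k,λ)`-DS then the family is an `(n,m,k,σ,ν)`-EPDF iff it is an
`(n,m,k,λ-σ,λ-ν)`-DPDF; (ii) if the union is an `(n,m*k,λ,μ)`-PDS then the family is an
`(n,m,k,λ*,μ*)`-EPDF iff it is an `(n,m,k,λ-λ*,μ-μ*)`-DPDF. -/
theorem union_ds_or_pds_epdf_iff_dpdf {G : Type*} [AddGroup G] [DecidableEq G] [Fintype G]
    (n m k : ℕ) (lam mu sig nu lamStar muStar : ℤ) (D : Fin m → Finset G)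
    (hdisj : ∀ i j, i ≠ j → Disjoint (D i) (D j))
    (hcard : ∀ i, (D i).card = k)
    (hzero : ∀ i, (0 : G) ∉ D i) :
    (IsDS n (m * k) lam (famU D) →
      (IsEPDF n m k sig nu D ↔ IsDPDF n m k (lam - sig) (lam - nu) D)) ∧
    (IsPDS n (m * k) lam mu (famU D) →
      (IsEPDF n m k lamStar muStar D ↔ IsDPDF n m k (lam - lamStar) (mu - muStar) D)) := by
  have hnot0 : (0 : G) ∉ famU D := by
    simp only [famU, Finset.mem_biUnion]
    rintro ⟨i, -, h⟩
    exact hzero i h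
  have hkey : ∀ x : G, ((intDiff (famU D)).count x : ℤ)
      = ((famInt D).count x : ℤ) + ((famExt D).count x : ℤ) := by
    intro x
    exact_mod_cast congrArg (Nat.cast : ℕ → ℤ) (key D hdisj x)
  constructor
  · rintro ⟨hn, -, hc⟩
    constructor
    · rintro ⟨⟨-, hm, -, -⟩, -, he⟩
      refine ⟨⟨hn, hm, hcard, hdisj⟩, hzero, fun x => ?_⟩
      have h1 := hkey x; have h2 := he x; have h3 := hc x
      by_cases hx : x ∈ famU D <;> by_cases hx0 : x = 0
      · exact absurd (hx0 ▸ hx) hnot0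
      all_goals simp only [hx, hx0, hnot0, if_true, if_false] at h1 h2 h3 ⊢ <;> linarith
    · rintro ⟨⟨-, hm, -, -⟩, -, he⟩
      refine ⟨⟨hn, hm, hcard, hdisj⟩, hzero, fun x => ?_⟩
      have h1 := hkey x; have h2 := he x; have h3 := hc x
      by_cases hx : x ∈ famU D <;> by_cases hx0 : x = 0
      · exact absurd (hx0 ▸ hx) hnot0
      all_goals simp only [hx, hx0, hnot0, if_true, if_false] at h1 h2 h3 ⊢ <;> linarith
  · rintro ⟨hn, -, hc⟩
    constructor
    · rintro ⟨⟨-, hm, -, -⟩, -, he⟩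
      refine ⟨⟨hn, hm, hcard, hdisj⟩, hzero, fun x => ?_⟩
      have h1 := hkey x; have h2 := he x; have h3 := hc x
      by_cases hx : x ∈ famU D <;> by_cases hx0 : x = 0
      · exact absurd (hx0 ▸ hx) hnot0
      all_goals simp only [hx, hx0, hnot0, if_true, if_false] at h1 h2 h3 ⊢ <;> linarith
    · rintro ⟨⟨-, hm, -, -⟩, -, he⟩
      refine ⟨⟨hn, hm, hcard, hdisj⟩, hzero, fun x => ?_⟩
      have h1 := hkey x; have h2 := he x; have h3 := hc x
      by_cases hx : x ∈ famU D <;> by_cases hx0 : x = 0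
      · exact absurd (hx0 ▸ hx) hnot0
      all_goals simp only [hx, hx0, hnot0, if_true, if_false] at h1 h2 h3 ⊢ <;> linarith
end

section
/- Let q = ef + 1 = ερ + 1 be a prime power with e, f, ε, ρ > 1 and ε | e. (i) If φ₁ = φ₂ = ⋯ = φ_{ε−1}, then Int(C₀^ε′) = φ₀(C₀^ε) + φ₁(G* \ C₀^ε) as multisets, i.e. C₀^ε′ is a disjoint partial difference family (and C₀^ε is a partial difference set when ε = e). (ii) If φ₀ = φ₁ = ⋯ = φ_{ε−1}, then Int(C₀^ε′) = φ₀(G*) as multisets, i.e. C₀^ε′ is a disjoint difference family (and C₀^ε is a difference set when ε = e). -/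
open Finset

section AuxCount
set_option linter.unusedSectionVars false
variable {G : Type*} [AddGroup G] [DecidableEq G]
variable {ι : Type*} [Fintype ι] [DecidableEq ι]

lemma count_intDiff_s8 (D : Finset G) {x : G} (hx : x ≠ 0) :
    (intDiff D).count x = ((D ×ˢ D).filter fun p => p.1 - p.2 = x).card := by
  rw [intDiff, Multiset.count_map]
  rw [← Finset.filter_val, Finset.filter_filter]
  show (Finset.filter _ _).card = _
  congr 1
  apply Finset.filter_congr
  intro p _
  simp only [eq_comm (a := x)]
  constructor
  · rintro ⟨h1, h2⟩; exact h2
  · intro h; exact ⟨fun he => hx (by rw [← h, he, sub_self]), h⟩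


lemma count_intDiff_zero (D : Finset G) : (intDiff D).count 0 = 0 := by
  rw [Multiset.count_eq_zero]
  intro h
  rw [intDiff, Multiset.mem_map] at h
  obtain ⟨p, hp, hp2⟩ := h
  rw [← Finset.mem_def, Finset.mem_filter] at hp
  exact hp.2 (by rwa [sub_eq_zero] at hp2)


lemma count_famInt_zero (D : ι → Finset G) : (famInt D).count 0 = 0 := by
  rw [famInt, Multiset.count_sum']
  simp [count_intDiff_zero]

end AuxCount

section AuxField
set_option linter.unusedSectionVars false
variable {F : Type*} [Field F] [DecidableEq F] {α : F}

lemma pow_eq_iff (hα0 : α ≠ 0) {a b : ℕ} : α ^ a = α ^ b ↔ a ≡ b [MOD orderOf α] := by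
  have hu : ∀ n : ℕ, ((Units.mk0 α hα0) ^ n : Fˣ) = (α ^ n : F) := fun n => by
    rw [Units.val_pow_eq_pow_val]; rfl
  have ho : orderOf α = orderOf (Units.mk0 α hα0) := by
    rw [← orderOf_units (y := Units.mk0 α hα0)]; rfl
  rw [ho]
  constructor
  · intro h
    exact pow_eq_pow_iff_modEq.mp (Units.ext (by rw [hu, hu]; exact h))
  · intro h
    have h2 := (pow_eq_pow_iff_modEq (x := Units.mk0 α hα0)).mpr h
    rw [← hu, ← hu, h2]

lemma pow_ord_inv (hα0 : α ≠ 0) {N : ℕ} (hN : orderOf α = N) (hNpos : 0 < N) (b : ℕ) :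
    (α ^ b)⁻¹ = α ^ (N - b % N) := by
  apply inv_eq_of_mul_eq_one_right
  rw [← pow_add]
  have h1 : N * (b / N) + b % N = b := Nat.div_add_mod b N
  have h2 : b % N < N := Nat.mod_lt _ hNpos
  have h3 : b + (N - b % N) = N * (b / N + 1) := by
    have : N * (b / N + 1) = N * (b / N) + N := by ring
    omega
  rw [h3, pow_mul, ← hN, pow_orderOf_eq_one, one_pow]

/-- exponent congruence helper -/
lemma exp_helper {N d s b : ℕ} (hd : d ∣ N) (hNpos : 0 < N) :
    (s + (N - b % N)) + b ≡ s [MOD d] := by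
  have h1 : N * (b / N) + b % N = b := Nat.div_add_mod b N
  have h2 : b % N < N := Nat.mod_lt _ hNpos
  have h3 : (s + (N - b % N)) + b = s + N * (b / N + 1) := by
    have : N * (b / N + 1) = N * (b / N) + N := by ring
    omega
  rw [h3]
  have h4 : d ∣ N * (b / N + 1) := hd.mul_right _
  calc s + N * (b / N + 1) ≡ s + 0 [MOD d] :=
        Nat.ModEq.add_left s ((Nat.modEq_zero_iff_dvd).mpr h4)
    _ = s := by omega

lemma mem_cyclo_iff {e f : ℕ} (hα0 : α ≠ 0) (hord : orderOf α = e * f)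
    (he : 0 < e) (hf : 0 < f) {i : ℕ} {x : F} :
    x ∈ cyclo α e f i ↔ ∃ k, x = α ^ k ∧ k % e = i % e := by
  constructor
  · intro hx
    simp only [cyclo, Finset.mem_image, Finset.mem_range] at hx
    obtain ⟨j, hj, rfl⟩ := hx
    exact ⟨i + e * j, rfl, by simp [Nat.add_mul_mod_self_left]⟩
  · rintro ⟨k, rfl, hk⟩
    have hN : 0 < e * f := Nat.mul_pos he hf
    set k' := k + e * (f * i) with hk'def
    have hkk' : α ^ k = α ^ k' := by
      rw [hk'def, pow_add, ← mul_assoc, pow_mul, ← hord, pow_orderOf_eq_one, one_pow, mul_one]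
    have hk'mod : k' % e = i % e := by
      rw [hk'def, Nat.add_mul_mod_self_left]; exact hk
    have hk'ge : i ≤ k' := by
      have : i ≤ e * (f * i) := by
        calc i = 1 * i := (one_mul i).symm
        _ ≤ (e * f) * i := Nat.mul_le_mul_right i hN
        _ = e * (f * i) := by ring
      omega
    have hdvd : e ∣ k' - i := (Nat.modEq_iff_dvd' hk'ge).mp (by
      show i % e = k' % e; omega)
    obtain ⟨t, ht⟩ := hdvd
    have hk'eq : k' = i + e * t := by omega
    refine Finset.mem_image.mpr ⟨t % f, Finset.mem_range.mpr (Nat.mod_lt _ hf), ?_⟩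
    rw [hkk']
    rw [pow_eq_iff hα0, hord]
    have : e * (t % f) ≡ e * t [MOD e * f] := Nat.ModEq.mul_left' _ (Nat.mod_modEq t f)
    calc i + e * (t % f) ≡ i + e * t [MOD e * f] := Nat.ModEq.add_left i this
      _ = k' := hk'eq.symm

lemma zero_notMem_cyclo {e f : ℕ} (hα0 : α ≠ 0) {i : ℕ} : (0:F) ∉ cyclo α e f i := by
  simp only [cyclo, Finset.mem_image, Finset.mem_range, not_exists]
  rintro j ⟨hj, h⟩
  exact pow_ne_zero _ hα0 h

lemma card_cyclo {e f : ℕ} (hα0 : α ≠ 0) (hord : orderOf α = e * f)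
    (he : 0 < e) (hf : 0 < f) (i : ℕ) : (cyclo α e f i).card = f := by
  rw [cyclo, Finset.card_image_of_injOn, Finset.card_range]
  intro j hj j' hj' hjj'
  simp only [Finset.coe_range, Set.mem_Iio] at hj hj'
  have h := (pow_eq_iff hα0).mp hjj'
  rw [hord] at h
  have h2 : ((e : ℤ) * f) ∣ (i + e * j') - (i + e * j) := by
    have := h.dvd
    exact_mod_cast this
  have h3 : (e:ℤ) * j' - e * j = e * (j' - j) := by ring
  have h4 : ((e:ℤ)) * f ∣ e * ((j':ℤ) - j) := by
    have : ((i:ℤ) + e * j') - (i + e * j) = e * ((j':ℤ) - j) := by ring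
    rwa [this] at h2
  have h5 : (f:ℤ) ∣ (j':ℤ) - j := by
    rcases h4 with ⟨c, hc⟩
    refine ⟨c, ?_⟩
    have he' : (e:ℤ) ≠ 0 := by exact_mod_cast he.ne'
    have : (e:ℤ) * ((j':ℤ) - j) = e * (f * c) := by rw [hc]; ring
    exact mul_left_cancel₀ he' this
  have h6 : ((j':ℤ) - j) = 0 := by
    rcases h5 with ⟨c, hc⟩
    rcases lt_trichotomy c 0 with h|h|h
    · nlinarith [hc, (show (j':ℤ) < f by exact_mod_cast hj'), (show (0:ℤ) ≤ j by positivity)]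
    · rw [hc, h, mul_zero]
    · nlinarith [hc, (show (j:ℤ) < f by exact_mod_cast hj), (show (0:ℤ) ≤ j' by positivity)]
  have : (j:ℤ) = j' := by omega
  exact_mod_cast this

lemma cyclo_disjoint {e f : ℕ} (hα0 : α ≠ 0) (hord : orderOf α = e * f)
    (he : 0 < e) (hf : 0 < f) {i1 i2 : ℕ} (h : i1 % e ≠ i2 % e) :
    Disjoint (cyclo α e f i1) (cyclo α e f i2) := by
  rw [Finset.disjoint_left]
  intro x hx1 hx2
  obtain ⟨k, rfl, hk⟩ := (mem_cyclo_iff hα0 hord he hf).mp hx1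
  obtain ⟨k', hk', hk'2⟩ := (mem_cyclo_iff hα0 hord he hf).mp hx2
  have := (pow_eq_iff hα0).mp hk'
  rw [hord] at this
  have h9 : k ≡ k' [MOD e] := Nat.ModEq.of_dvd ⟨f, rfl⟩ this
  exact h (by rw [← hk, ← hk'2]; exact h9)

lemma mul_mem_cyclo {e f : ℕ} (hα0 : α ≠ 0) (hord : orderOf α = e * f)
    (he : 0 < e) (hf : 0 < f) {i j : ℕ} {x y : F}
    (hx : x ∈ cyclo α e f i) (hy : y ∈ cyclo α e f j) :
    x * y ∈ cyclo α e f (i + j) := by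
  obtain ⟨a, rfl, ha⟩ := (mem_cyclo_iff hα0 hord he hf).mp hx
  obtain ⟨b, rfl, hb⟩ := (mem_cyclo_iff hα0 hord he hf).mp hy
  exact (mem_cyclo_iff hα0 hord he hf).mpr ⟨a + b, (pow_add α a b).symm, Nat.ModEq.add ha hb⟩



lemma exp_cong {N d s b t : ℕ} (hd : d ∣ N) (hN : 0 < N) (h : b + t ≡ s [MOD d]) :
    (s + (N - b % N)) ≡ t [MOD d] := by
  have h1 := exp_helper (s := s) (b := b) hd hN
  have h2 : (s + (N - b % N)) + b ≡ b + t [MOD d] := h1.trans h.symm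
  have h3 : b + (s + (N - b % N)) ≡ b + t [MOD d] := by rwa [add_comm] at h2
  exact Nat.ModEq.add_left_cancel' b h3

variable {e f eps rho : ℕ}

lemma mem_C0eps_iff (hα0 : α ≠ 0) (hord1 : orderOf α = e * f) (hord2 : orderOf α = eps * rho)
    (he : 0 < e) (hf : 0 < f) (heps : 0 < eps) (hrho : 0 < rho) (hepse : eps ∣ e) {x : F} :
    x ∈ cyclo α eps rho 0 ↔ ∃ i : Fin (e / eps), x ∈ cyclo α e f (eps * (i : ℕ)) := by
  constructor
  · intro hx
    obtain ⟨k, rfl, hk⟩ := (mem_cyclo_iff hα0 hord2 heps hrho).mp hx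
    rw [Nat.zero_mod] at hk
    have hdvd : eps ∣ k % e := by
      have h1 : k % e = k - e * (k / e) := by
        have := Nat.div_add_mod k e; omega
      rw [h1]
      exact Nat.dvd_sub (Nat.dvd_of_mod_eq_zero hk) (hepse.mul_right _)
    have hlt : (k % e) / eps < e / eps := Nat.div_lt_div_of_lt_of_dvd hepse (Nat.mod_lt _ he)
    refine ⟨⟨(k % e) / eps, hlt⟩, ?_⟩
    apply (mem_cyclo_iff hα0 hord1 he hf).mpr
    refine ⟨k, rfl, ?_⟩
    have h2 : eps * ((k % e) / eps) = k % e := Nat.mul_div_cancel' hdvd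
    rw [h2, Nat.mod_mod_of_dvd _ (dvd_refl e)]
  · rintro ⟨i, hx⟩
    obtain ⟨k, rfl, hk⟩ := (mem_cyclo_iff hα0 hord1 he hf).mp hx
    apply (mem_cyclo_iff hα0 hord2 heps hrho).mpr
    refine ⟨k, rfl, ?_⟩
    have h1 : k ≡ eps * (i : ℕ) [MOD eps] := Nat.ModEq.of_dvd hepse hk
    have h2 : k % eps = 0 := by
      have := h1; unfold Nat.ModEq at this
      rwa [Nat.mul_mod_right] at this
    rw [h2, Nat.zero_mod]

lemma exp_mod_of_mem (hα0 : α ≠ 0) (hord2 : orderOf α = eps * rho)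
    (heps : 0 < eps) (hrho : 0 < rho) {m k : ℕ} {x : F}
    (hx : x ∈ cyclo α eps rho m) (hk : x = α ^ k) : k % eps = m % eps := by
  obtain ⟨k', hk', h2⟩ := (mem_cyclo_iff hα0 hord2 heps hrho).mp hx
  have h3 : k ≡ k' [MOD eps * rho] := by
    rw [← hord2]
    exact (pow_eq_iff hα0).mp (by rw [← hk, ← hk'])
  have h4 : k ≡ k' [MOD eps] := Nat.ModEq.of_dvd ⟨rho, rfl⟩ h3
  unfold Nat.ModEq at h4
  omega


end AuxField

section AuxMain
set_option linter.unusedSectionVars false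
variable {F : Type*} [Field F] [DecidableEq F] {α : F} {e f eps rho : ℕ}

lemma famInt_count (hα0 : α ≠ 0) (hord1 : orderOf α = e * f) (hord2 : orderOf α = eps * rho)
    (he : 0 < e) (hf : 0 < f) (heps : 0 < eps) (hrho : 0 < rho) (hepse : eps ∣ e)
    {x : F} {k : ℕ} (hx0 : x ≠ 0) (hxk : x = α ^ k) :
    (famInt fun i : Fin (e / eps) => cyclo α e f (eps * (i : ℕ))).count x
      = phi α e f eps rho (k % eps) := by
  have hNpos : 0 < e * f := Nat.mul_pos he hf
  have hdvdE : e ∣ e * f := ⟨f, rfl⟩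
  have hdvdEps : eps ∣ e * f := hepse.trans hdvdE
  have hltE : ∀ j : Fin (e / eps), eps * (j : ℕ) < e := by
    intro j
    have h1 : eps * (j : ℕ) < eps * (e / eps) := mul_lt_mul_of_pos_left j.2 heps
    rwa [Nat.mul_div_cancel' hepse] at h1
  rw [famInt, Multiset.count_sum']
  rw [Finset.sum_congr rfl fun i _ => count_intDiff_s8 _ hx0]
  rw [← Finset.card_sigma]
  unfold phi
  apply Finset.card_bij (fun p _ => p.2.1 * p.2.2⁻¹)
  · -- maps to Phi
    rintro ⟨i, u, v⟩ hp
    simp only [Finset.mem_sigma, Finset.mem_univ, true_and, Finset.mem_filter,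
      Finset.mem_product] at hp
    obtain ⟨⟨hu, hv⟩, hdiff⟩ := hp
    obtain ⟨a, hua, ha⟩ := (mem_cyclo_iff hα0 hord1 he hf).mp hu
    obtain ⟨b, hvb, hb⟩ := (mem_cyclo_iff hα0 hord1 he hf).mp hv
    have hv0 : v ≠ 0 := fun h => zero_notMem_cyclo hα0 (h ▸ hv)
    have hinv : v⁻¹ = α ^ (e * f - b % (e * f)) := by
      rw [hvb]; exact pow_ord_inv hα0 hord1 hNpos b
    have hc : u * v⁻¹ = α ^ (a + (e * f - b % (e * f))) := by rw [hua, hinv, pow_add]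
    rw [Phi, Finset.mem_filter]
    refine ⟨?_, ?_, ?_⟩
    · apply (mem_cyclo_iff hα0 hord1 he hf).mpr
      refine ⟨_, hc, ?_⟩
      have hba : b + 0 ≡ a [MOD e] := by
        show (b + 0) % e = a % e
        rw [add_zero, hb, ha]
      exact exp_cong hdvdE hNpos hba
    · intro h1
      have h1' : u * v⁻¹ = 1 := h1
      rw [(mul_inv_eq_one₀ hv0).mp h1', sub_self] at hdiff
      exact hx0 hdiff.symm
    · have hc1 : u * v⁻¹ - 1 = x * v⁻¹ := by
        rw [← hdiff]; field_simp
      rw [hc1, hxk, hinv, ← pow_add]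
      apply (mem_cyclo_iff hα0 hord2 heps hrho).mpr
      refine ⟨_, rfl, ?_⟩
      have hb0 : b % eps = 0 := by
        have h1 : b % eps = (eps * (i : ℕ)) % eps := Nat.ModEq.of_dvd hepse hb
        rwa [Nat.mul_mod_right] at h1
      have hbk : b + k % eps ≡ k [MOD eps] := by
        show (b + k % eps) % eps = k % eps
        rw [Nat.add_mod, hb0, Nat.zero_add, Nat.mod_mod_of_dvd _ (dvd_refl eps),
          Nat.mod_mod_of_dvd _ (dvd_refl eps)]
      exact exp_cong hdvdEps hNpos hbk
  · -- injective
    rintro ⟨i, u, v⟩ h1 ⟨i', u', v'⟩ h2 heq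
    simp only [Finset.mem_sigma, Finset.mem_univ, true_and, Finset.mem_filter,
      Finset.mem_product] at h1 h2
    obtain ⟨⟨hu, hv⟩, hdiff⟩ := h1
    obtain ⟨⟨hu', hv'⟩, hdiff'⟩ := h2
    have hv0 : v ≠ 0 := fun h => zero_notMem_cyclo hα0 (h ▸ hv)
    have hv'0 : v' ≠ 0 := fun h => zero_notMem_cyclo hα0 (h ▸ hv')
    have e1 : u = x + v := by rw [← hdiff]; ring
    have e2 : u' = x + v' := by rw [← hdiff']; ring
    have heq' : u * v⁻¹ = u' * v'⁻¹ := heq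
    have h3 : x * v⁻¹ + 1 = x * v'⁻¹ + 1 := by
      have l1 : u * v⁻¹ = x * v⁻¹ + 1 := by rw [e1, add_mul, mul_inv_cancel₀ hv0]
      have l2 : u' * v'⁻¹ = x * v'⁻¹ + 1 := by rw [e2, add_mul, mul_inv_cancel₀ hv'0]
      rw [← l1, ← l2]; exact heq'
    have h4 : v = v' := by
      have h5 : x * v⁻¹ = x * v'⁻¹ := add_right_cancel h3
      have h6 : v⁻¹ = v'⁻¹ := mul_left_cancel₀ hx0 h5
      exact inv_injective h6
    have h7 : i = i' := by
      by_contra hne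
      have hmods : eps * (i : ℕ) % e ≠ eps * (i' : ℕ) % e := by
        rw [Nat.mod_eq_of_lt (hltE i), Nat.mod_eq_of_lt (hltE i')]
        intro hcon
        exact hne (Fin.ext (Nat.eq_of_mul_eq_mul_left heps hcon))
      have hd := cyclo_disjoint hα0 hord1 he hf hmods
      exact Finset.disjoint_left.mp hd hv (h4 ▸ hv')
    subst h7
    have h8 : u = u' := by rw [e1, e2, h4]
    simp [h4, h8]
  · -- surjective
    intro c hc
    rw [Phi, Finset.mem_filter] at hc
    obtain ⟨hc0, hc1, hcm⟩ := hc
    have hw0 : c - 1 ≠ 0 := sub_ne_zero.mpr hc1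
    obtain ⟨bw, hwb, hbw⟩ := (mem_cyclo_iff hα0 hord2 heps hrho).mp hcm
    have hinv : (c - 1)⁻¹ = α ^ (e * f - bw % (e * f)) := by
      rw [hwb]; exact pow_ord_inv hα0 hord1 hNpos bw
    have hv : x * (c - 1)⁻¹ = α ^ (k + (e * f - bw % (e * f))) := by
      rw [hxk, hinv, pow_add]
    have hvmem0 : x * (c - 1)⁻¹ ∈ cyclo α eps rho 0 := by
      apply (mem_cyclo_iff hα0 hord2 heps hrho).mpr
      refine ⟨_, hv, ?_⟩
      have hbk : bw + 0 ≡ k [MOD eps] := by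
        show (bw + 0) % eps = k % eps
        rw [add_zero, hbw, Nat.mod_mod_of_dvd _ (dvd_refl eps)]
      have := exp_cong hdvdEps hNpos hbk
      exact this
    obtain ⟨i, hvi⟩ := (mem_C0eps_iff hα0 hord1 hord2 he hf heps hrho hepse).mp hvmem0
    have hv0 : x * (c - 1)⁻¹ ≠ 0 := fun h => zero_notMem_cyclo hα0 (h ▸ hvi)
    have humem : c * (x * (c - 1)⁻¹) ∈ cyclo α e f (eps * (i : ℕ)) := by
      have := mul_mem_cyclo hα0 hord1 he hf hc0 hvi
      rwa [zero_add] at this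
    refine ⟨⟨i, c * (x * (c - 1)⁻¹), x * (c - 1)⁻¹⟩, ?_, ?_⟩
    · simp only [Finset.mem_sigma, Finset.mem_univ, true_and, Finset.mem_filter,
        Finset.mem_product]
      refine ⟨⟨humem, hvi⟩, ?_⟩
      have : c * (x * (c - 1)⁻¹) - x * (c - 1)⁻¹ = (c - 1) * (x * (c - 1)⁻¹) := by ring
      rw [this, mul_comm x, ← mul_assoc, mul_inv_cancel₀ hw0, one_mul]
    · exact mul_inv_cancel_right₀ hv0 c


end AuxMain

section AuxPrim
set_option linter.unusedSectionVars false
variable {F : Type*} [Field F] [Fintype F] [DecidableEq F] {α : F}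

lemma prim_ne_zero (hα : IsPrimitiveElt α) (hcard : 4 < Fintype.card F) : α ≠ 0 := by
  intro h0
  have hsub : ({0, 1} : Finset F) ⊆ univ := Finset.subset_univ _
  have hlt : ({0, 1} : Finset F).card < (univ : Finset F).card := by
    have h2 : ({0, 1} : Finset F).card ≤ 2 := Finset.card_insert_le _ _ |>.trans (by simp)
    have h3 : (univ : Finset F).card = Fintype.card F := Finset.card_univ
    omega
  have hne : (univ \ ({0, 1} : Finset F)).Nonempty := by
    rw [← Finset.card_pos, Finset.card_sdiff_of_subset hsub]; omega
  obtain ⟨x, hx⟩ := hne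
  rw [Finset.mem_sdiff, Finset.mem_insert, Finset.mem_singleton] at hx
  push_neg at hx
  obtain ⟨-, hx0, hx1⟩ := hx
  obtain ⟨k, hk⟩ := hα x hx0
  rcases Nat.eq_zero_or_pos k with h | h
  · rw [h, pow_zero] at hk; exact hx1 hk
  · rw [h0, zero_pow (by omega)] at hk; exact hx0 hk

lemma prim_orderOf (hα : IsPrimitiveElt α) (h0 : α ≠ 0) :
    orderOf α = Fintype.card F - 1 := by
  have hmem : ∀ w : Fˣ, w ∈ Subgroup.zpowers (Units.mk0 α h0) := by
    intro w
    obtain ⟨k, hk⟩ := hα w.val w.ne_zero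
    refine ⟨(k : ℤ), ?_⟩
    show Units.mk0 α h0 ^ (k : ℤ) = w
    rw [zpow_natCast]
    exact Units.ext (by rw [Units.val_pow_eq_pow_val]; exact hk.symm)
  have h1 : orderOf (Units.mk0 α h0) = Nat.card Fˣ :=
    orderOf_eq_card_of_forall_mem_zpowers hmem
  have h2 : orderOf α = orderOf (Units.mk0 α h0) := by
    rw [← orderOf_units (y := Units.mk0 α h0)]; rfl
  rw [h2, h1, Nat.card_eq_fintype_card, Fintype.card_units]

end AuxPrim

/-- Theorem: let `q = ef+1 = ερ+1` be a prime power with `ε ∣ e`.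
(i) If `φ₁ = ⋯ = φ_{ε-1}` then `Int(C₀^ε′) = φ₀(C₀^ε) + φ₁(G* \ C₀^ε)`, i.e. `C₀^ε′` is a
DPDF (and `C₀^ε` is a PDS when `ε = e`).
(ii) If `φ₀ = φ₁ = ⋯ = φ_{ε-1}` then `Int(C₀^ε′) = φ₀(G*)`, i.e. `C₀^ε′` is a DDF
(and `C₀^ε` is a DS when `ε = e`). -/
theorem phi_equal_gives_dpdf_or_ddf {F : Type*} [Field F] [Fintype F] [DecidableEq F]
    (q e f eps rho : ℕ) (α : F)
    (hq : Fintype.card F = q) (hα : IsPrimitiveElt α)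
    (hef : q = e * f + 1) (he : 1 < e) (hf : 1 < f)
    (herho : q = eps * rho + 1) (hepse : eps ∣ e) (heps : 1 < eps) (hrho : 1 < rho) :
    ((∀ j, 1 ≤ j → j ≤ eps - 1 → phi α e f eps rho j = phi α e f eps rho 1) →
      ((∀ x : F, (famInt fun i : Fin (e / eps) => cyclo α e f (eps * (i : ℕ))).count x =
          if x ∈ cyclo α eps rho 0 then phi α e f eps rho 0
          else if x = 0 then 0 else phi α e f eps rho 1) ∧
       IsDPDF q (e / eps) f (phi α e f eps rho 0 : ℤ) (phi α e f eps rho 1 : ℤ)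
         (fun i : Fin (e / eps) => cyclo α e f (eps * (i : ℕ))) ∧
       (eps = e → IsPDS q f (phi α e f eps rho 0 : ℤ) (phi α e f eps rho 1 : ℤ)
         (cyclo α eps rho 0)))) ∧
    ((∀ j, j ≤ eps - 1 → phi α e f eps rho j = phi α e f eps rho 0) →
      ((∀ x : F, (famInt fun i : Fin (e / eps) => cyclo α e f (eps * (i : ℕ))).count x =
          if x = 0 then 0 else phi α e f eps rho 0) ∧
       IsDDF q (e / eps) f (phi α e f eps rho 0 : ℤ)
         (fun i : Fin (e / eps) => cyclo α e f (eps * (i : ℕ))) ∧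
       (eps = e → IsDS q f (phi α e f eps rho 0 : ℤ) (cyclo α eps rho 0))))  := by
  have he0 : 0 < e := by omega
  have hf0 : 0 < f := by omega
  have heps0 : 0 < eps := by omega
  have hrho0 : 0 < rho := by omega
  have hq5 : 4 < Fintype.card F := by
    have h4 : 2 * 2 ≤ e * f := Nat.mul_le_mul he hf
    omega
  have hα0 : α ≠ 0 := prim_ne_zero hα hq5
  have hordc : orderOf α = Fintype.card F - 1 := prim_orderOf hα hα0
  have hord1 : orderOf α = e * f := by rw [hordc, hq]; omega
  have hord2 : orderOf α = eps * rho := by rw [hordc, hq]; omega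
  have hefr : e * f = eps * rho := by omega
  have hltE : ∀ j : Fin (e / eps), eps * (j : ℕ) < e := fun j => by
    have h1 : eps * (j : ℕ) < eps * (e / eps) := mul_lt_mul_of_pos_left j.2 heps0
    rwa [Nat.mul_div_cancel' hepse] at h1
  have hdisj : ∀ i j : Fin (e / eps), i ≠ j →
      Disjoint (cyclo α e f (eps * (i : ℕ))) (cyclo α e f (eps * (j : ℕ))) := by
    intro i j hij
    apply cyclo_disjoint hα0 hord1 he0 hf0
    rw [Nat.mod_eq_of_lt (hltE i), Nat.mod_eq_of_lt (hltE j)]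
    intro hcon
    exact hij (Fin.ext (Nat.eq_of_mul_eq_mul_left heps0 hcon))
  have hfamU : famU (fun i : Fin (e / eps) => cyclo α e f (eps * (i : ℕ)))
      = cyclo α eps rho 0 := by
    ext x
    rw [famU, Finset.mem_biUnion]
    constructor
    · rintro ⟨i, -, hi⟩
      exact (mem_C0eps_iff hα0 hord1 hord2 he0 hf0 heps0 hrho0 hepse).mpr ⟨i, hi⟩
    · intro hx
      obtain ⟨i, hi⟩ := (mem_C0eps_iff hα0 hord1 hord2 he0 hf0 heps0 hrho0 hepse).mp hx
      exact ⟨i, Finset.mem_univ _, hi⟩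
  have hshape : FamShape q (e / eps) f (fun i : Fin (e / eps) => cyclo α e f (eps * (i : ℕ))) :=
    ⟨hq, Fintype.card_fin _, fun i => card_cyclo hα0 hord1 he0 hf0 _, hdisj⟩
  have hkey : eps = e → rho = f ∧
      (famInt fun i : Fin (e / eps) => cyclo α e f (eps * (i : ℕ)))
        = intDiff (cyclo α eps rho 0) := by
    intro heqe
    have hrhof : rho = f := by
      have h : e * f = e * rho := by rw [hefr, heqe]
      exact (Nat.eq_of_mul_eq_mul_left he0 h).symm
    have h1 : e / eps = 1 := by rw [heqe, Nat.div_self he0]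
    have hD : ∀ i : Fin (e / eps), cyclo α e f (eps * (i : ℕ)) = cyclo α eps rho 0 := by
      intro i
      have hi0 : (i : ℕ) = 0 := by have := i.2; omega
      rw [hi0, Nat.mul_zero, heqe, hrhof]
    refine ⟨hrhof, ?_⟩
    rw [famInt, Finset.sum_congr rfl fun i _ => by rw [hD i], Finset.sum_const,
      Finset.card_univ, Fintype.card_fin, h1, one_smul]
  constructor
  · intro hyp1
    have c1 : ∀ x : F, (famInt fun i : Fin (e / eps) => cyclo α e f (eps * (i : ℕ))).count x =
        if x ∈ cyclo α eps rho 0 then phi α e f eps rho 0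
        else if x = 0 then 0 else phi α e f eps rho 1 := by
      intro x
      by_cases hx0 : x = 0
      · subst hx0
        rw [count_famInt_zero, if_neg (zero_notMem_cyclo hα0), if_pos rfl]
      · obtain ⟨k, hk⟩ := hα x hx0
        rw [famInt_count hα0 hord1 hord2 he0 hf0 heps0 hrho0 hepse hx0 hk]
        by_cases hmem : x ∈ cyclo α eps rho 0
        · rw [if_pos hmem]
          have h1 : k % eps = 0 % eps := exp_mod_of_mem hα0 hord2 heps0 hrho0 hmem hk
          rw [Nat.zero_mod] at h1
          rw [h1]
        · rw [if_neg hmem, if_neg hx0]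
          have hne : k % eps ≠ 0 := by
            intro h
            exact hmem ((mem_cyclo_iff hα0 hord2 heps0 hrho0).mpr
              ⟨k, hk, by rw [h, Nat.zero_mod]⟩)
          have hlt : k % eps < eps := Nat.mod_lt _ heps0
          exact hyp1 (k % eps) (by omega) (by omega)
    refine ⟨c1, ⟨hshape, fun i => zero_notMem_cyclo hα0, ?_⟩, ?_⟩
    · intro x
      rw [hfamU]
      have h := c1 x
      split_ifs at h ⊢ with h1 h2 <;> exact_mod_cast h
    · intro heqe
      obtain ⟨hrhof, hfam⟩ := hkey heqe
      refine ⟨hq, ?_, ?_⟩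
      · rw [card_cyclo hα0 hord2 heps0 hrho0, hrhof]
      · intro x
        have h := c1 x
        rw [hfam] at h
        split_ifs at h ⊢ with h1 h2 <;> exact_mod_cast h
  · intro hyp2
    have c2 : ∀ x : F, (famInt fun i : Fin (e / eps) => cyclo α e f (eps * (i : ℕ))).count x =
        if x = 0 then 0 else phi α e f eps rho 0 := by
      intro x
      by_cases hx0 : x = 0
      · subst hx0; rw [count_famInt_zero, if_pos rfl]
      · obtain ⟨k, hk⟩ := hα x hx0
        rw [famInt_count hα0 hord1 hord2 he0 hf0 heps0 hrho0 hepse hx0 hk, if_neg hx0]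
        have hlt : k % eps < eps := Nat.mod_lt _ heps0
        exact hyp2 (k % eps) (by omega)
    refine ⟨c2, ⟨hshape, ?_⟩, ?_⟩
    · intro x
      have h := c2 x
      split_ifs at h ⊢ with h1 <;> exact_mod_cast h
    · intro heqe
      obtain ⟨hrhof, hfam⟩ := hkey heqe
      refine ⟨hq, ?_, ?_⟩
      · rw [card_cyclo hα0 hord2 heps0 hrho0, hrhof]
      · intro x
        have h := c2 x
        rw [hfam] at h
        split_ifs at h ⊢ with h1 <;> exact_mod_cast h
end
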